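/- Let K ∈ ℕ and let a = (a₁, …, a_K) ∈ ℝ^K with 0 < a₁ ≤ a₂ ≤ ⋯ ≤ a_K and a_K < 1 (coefficients positive, increasing in index, all less than 1). Let A_a be the K×K companion matrix with ones on the superdiagonal and last row (−a₁, −a₂, …, −a_K). Then the spectral radius of A_a is strictly less than 1. -/

import Mathlib

open Polynomial Matrix Finset

/-- The `K × K` companion matrix with ones on the superdiagonal and last row `(-a 0, …, -a (K-1))`. -/
def companion {K : ℕ} (a : Fin K → ℝ) : Matrix (Fin K) (Fin K) ℝ :=
  fun i j => if (i : ℕ) + 1 = (j : ℕ) then 1 else if (i : ℕ) = K - 1 then -a j else 0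


theorem charpoly_root_eigen (n : Type*) [Fintype n] [DecidableEq n] (N : Matrix n n ℂ) (z : ℂ)
    (h : N.charpoly.IsRoot z) : ∃ v ≠ 0, N.mulVec v = z • v := by
  have hdet : ((Matrix.scalar n z) - N).det = 0 := by
    have h2 := RingHom.map_det (Polynomial.evalRingHom z) (charmatrix N)
    have h3 : (Polynomial.evalRingHom z).mapMatrix (charmatrix N) = Matrix.scalar n z - N := by
      ext i j
      by_cases hij : i = j
      · subst hij; simp [charmatrix_apply_eq]
      · simp [charmatrix_apply_ne _ _ _ hij, Matrix.scalar_apply, Matrix.diagonal_apply_ne _ hij,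
          Matrix.sub_apply]
    rw [h3] at h2
    rw [← h2]
    exact h
  obtain ⟨v, hv, hmul⟩ := (Matrix.exists_mulVec_eq_zero_iff).2 hdet
  refine ⟨v, hv, ?_⟩
  rw [Matrix.sub_mulVec] at hmul
  have h4 : (Matrix.scalar n z).mulVec v = z • v := by
    ext i; simp [Matrix.scalar_apply, Matrix.mulVec_diagonal]
  rw [h4] at hmul
  linear_combination (norm := module) -hmul


lemma sumid (n : ℕ) (b : ℕ → ℂ) (z : ℂ) :
    z * (∑ j ∈ Finset.range (n+1), b j * z ^ j) - ∑ j ∈ Finset.range (n+1), b j * z ^ j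
      = b n * z ^ (n+1) - b 0 + ∑ i ∈ Finset.range n, (b i - b (i+1)) * z ^ (i+1) := by
  induction n with
  | zero => simp; ring
  | succ m ih =>
    rw [Finset.sum_range_succ (fun j => b j * z ^ j) (m+1),
        Finset.sum_range_succ (fun i => (b i - b (i+1)) * z ^ (i+1)) m]
    linear_combination ih

theorem EK (K : ℕ) (b : ℕ → ℝ) (hpos : 0 < b 0) (hmono : Monotone b) (hlast : b K < 1) (z : ℂ)
    (hz : z ^ (K+1) + ∑ j ∈ Finset.range (K+1), (b j : ℂ) * z ^ j = 0) :
    ‖z‖ < 1 := by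
  by_contra hcon
  push_neg at hcon
  set r := ‖z‖ with hr
  have hb0K : b 0 ≤ b K := hmono (Nat.zero_le K)
  have hid := sumid K (fun n => (b n : ℂ)) z
  set Sc : ℂ := ∑ i ∈ Finset.range K, (((b i : ℂ)) - (b (i+1) : ℂ)) * z ^ (i+1) with hSc
  have hmain : z ^ (K+2) = (1 - (b K : ℂ)) * z ^ (K+1) + (b 0 : ℂ) - Sc := by
    rw [hSc]
    linear_combination (z - 1) * hz - hid
  -- bound on the sum, for any bound ρ ≥ r with ρ ≥ 1
  have hsum_bound : ∀ ρ : ℝ, 1 ≤ ρ → r ≤ ρ → ‖Sc‖ ≤ (b K - b 0) * ρ ^ (K+1) := by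
    intro ρ h1ρ hrρ
    calc ‖Sc‖ ≤ ∑ i ∈ Finset.range K, ‖(((b i : ℂ)) - (b (i+1) : ℂ)) * z ^ (i+1)‖ := by
          simpa using
            norm_sum_le (Finset.range K) (fun i => (((b i : ℂ)) - (b (i+1) : ℂ)) * z ^ (i+1))
      _ ≤ ∑ i ∈ Finset.range K, (b (i+1) - b i) * ρ ^ (K+1) := by
          apply Finset.sum_le_sum
          intro i hi
          rw [norm_mul, norm_pow]
          have h1 : ‖(b i : ℂ) - (b (i+1) : ℂ)‖ = b (i+1) - b i := by
            rw [← Complex.ofReal_sub, Complex.norm_real, Real.norm_eq_abs, abs_sub_comm,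
              abs_of_nonneg (by have := hmono (Nat.le_succ i); linarith)]
          rw [h1]
          have hmono' : b i ≤ b (i+1) := hmono (Nat.le_succ i)
          have h2 : r ^ (i+1) ≤ ρ ^ (K+1) := by
            calc r ^ (i+1) ≤ ρ ^ (i+1) := by
                  apply pow_le_pow_left₀ (norm_nonneg z) hrρ
              _ ≤ ρ ^ (K+1) := by
                  apply pow_le_pow_right₀ h1ρ
                  have := Finset.mem_range.mp hi
                  omega
          have hrpow : (0:ℝ) ≤ r ^ (i+1) := pow_nonneg (norm_nonneg z) _
          nlinarith [Finset.mem_range.mp hi]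
      _ = (b K - b 0) * ρ ^ (K+1) := by
          rw [← Finset.sum_mul, Finset.sum_range_sub b K]
  -- step A : r = 1
  have hrpos : (0:ℝ) < r ^ (K+1) := pow_pos (lt_of_lt_of_le one_pos hcon) _
  have hstepA : r = 1 := by
    have h1 : r ^ (K+2) ≤ (1 - b K) * r ^ (K+1) + b 0 + (b K - b 0) * r ^ (K+1) := by
      calc r ^ (K+2) = ‖z ^ (K+2)‖ := by rw [norm_pow]
        _ = ‖(1 - (b K : ℂ)) * z ^ (K+1) + (b 0 : ℂ) - Sc‖ := by rw [hmain]
        _ ≤ ‖(1 - (b K : ℂ)) * z ^ (K+1)‖ + ‖(b 0 : ℂ)‖ + ‖Sc‖ := by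
            have := norm_sub_le ((1 - (b K : ℂ)) * z ^ (K+1) + (b 0 : ℂ)) Sc
            have := norm_add_le ((1 - (b K : ℂ)) * z ^ (K+1)) ((b 0 : ℂ))
            linarith
        _ ≤ (1 - b K) * r ^ (K+1) + b 0 + (b K - b 0) * r ^ (K+1) := by
            have e1 : ‖(1 - (b K : ℂ)) * z ^ (K+1)‖ = (1 - b K) * r ^ (K+1) := by
              rw [norm_mul, norm_pow]
              congr 1
              rw [show (1 - (b K : ℂ)) = ((1 - b K : ℝ) : ℂ) by push_cast; ring,
                Complex.norm_real, Real.norm_eq_abs, abs_of_nonneg (by linarith)]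
            have e2 : ‖(b 0 : ℂ)‖ = b 0 := by
              rw [Complex.norm_real, Real.norm_eq_abs, abs_of_nonneg hpos.le]
            rw [e1, e2]
            have := hsum_bound r hcon le_rfl
            linarith
    have hr1 : (1:ℝ) ≤ r ^ (K+1) := by
      calc (1:ℝ) = 1 ^ (K+1) := by ring
        _ ≤ r ^ (K+1) := pow_le_pow_left₀ zero_le_one hcon _
    have h2 : b 0 ≤ b 0 * r ^ (K+1) := by nlinarith
    have h3 : r ^ (K+2) = r * r ^ (K+1) := by ring
    have h4 : r * r ^ (K+1) ≤ r ^ (K+1) := by nlinarith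
    have : r ≤ 1 := by nlinarith
    linarith
  -- consequences of r = 1
  have habs_pow : ∀ m : ℕ, ‖z ^ m‖ = 1 := by
    intro m; rw [norm_pow, ← hr, hstepA, one_pow]
  have hre_le : ∀ m : ℕ, (z ^ m).re ≤ 1 := by
    intro m
    calc (z ^ m).re ≤ ‖z ^ m‖ := Complex.re_le_norm _
      _ = 1 := habs_pow m
  have hunit : ∀ m : ℕ, 1 ≤ (z ^ m).re → z ^ m = 1 := by
    intro m hm
    have hre : (z ^ m).re = 1 := le_antisymm (hre_le m) hm
    have h1 : Complex.normSq (z ^ m) = 1 := by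
      rw [← Complex.sq_norm, habs_pow]; ring
    have h2 : (z ^ m).im = 0 := by
      have h3 := Complex.normSq_apply (z ^ m)
      nlinarith [sq_nonneg ((z ^ m).im)]
    apply Complex.ext
    · simpa using hre
    · simpa using h2
  have hScbound : ‖Sc‖ ≤ b K - b 0 := by
    have := hsum_bound 1 le_rfl (le_of_eq hstepA)
    simpa using this
  -- step B : z ^ (K+2) = 1
  have h5 : ‖z ^ (K+2) - (b 0 : ℂ)‖ ≤ 1 - b 0 := by
    have e : z ^ (K+2) - (b 0 : ℂ) = (1 - (b K : ℂ)) * z ^ (K+1) - Sc := by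
      rw [hmain]; ring
    rw [e]
    calc ‖(1 - (b K : ℂ)) * z ^ (K+1) - Sc‖
        ≤ ‖(1 - (b K : ℂ)) * z ^ (K+1)‖ + ‖Sc‖ := by
          simpa using
            norm_sub_le ((1 - (b K : ℂ)) * z ^ (K+1)) Sc
      _ ≤ (1 - b K) * 1 + (b K - b 0) := by
          have e1 : ‖(1 - (b K : ℂ)) * z ^ (K+1)‖ = (1 - b K) * 1 := by
            rw [norm_mul, habs_pow]
            congr 1
            rw [show (1 - (b K : ℂ)) = ((1 - b K : ℝ) : ℂ) by push_cast; ring,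
              Complex.norm_real, Real.norm_eq_abs, abs_of_nonneg (by linarith)]
          linarith [hScbound, e1.le, e1.ge]
      _ = 1 - b 0 := by ring
  have hwre : 1 ≤ (z ^ (K+2)).re := by
    have h6 : Complex.normSq (z ^ (K+2) - (b 0 : ℂ)) ≤ (1 - b 0) ^ 2 := by
      rw [← Complex.sq_norm]
      nlinarith [norm_nonneg (z ^ (K+2) - (b 0 : ℂ))]
    have h7 : Complex.normSq (z ^ (K+2)) = 1 := by
      rw [← Complex.sq_norm, habs_pow]; ring
    have h8 : Complex.normSq (z ^ (K+2) - (b 0 : ℂ))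
        = Complex.normSq (z ^ (K+2)) - 2 * (b 0) * (z ^ (K+2)).re + (b 0) ^ 2 := by
      simp [Complex.normSq_apply, Complex.sub_re, Complex.sub_im, Complex.normSq_apply]
      ring
    nlinarith
  have hw1 : z ^ (K+2) = 1 := hunit _ hwre
  -- step C : z ^ (K+1) = 1
  have hSre : b 0 - b K ≤ Sc.re := by
    rw [hSc, Complex.re_sum]
    have : ∑ i ∈ Finset.range K, (b i - b (i+1)) ≤
        ∑ i ∈ Finset.range K, ((((b i : ℂ)) - (b (i+1) : ℂ)) * z ^ (i+1)).re := by
      apply Finset.sum_le_sum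
      intro i _
      have e : (((b i : ℂ)) - (b (i+1) : ℂ)) * z ^ (i+1)
          = ((b i - b (i+1) : ℝ) : ℂ) * z ^ (i+1) := by push_cast; ring
      rw [e, Complex.re_ofReal_mul]
      have hc : b i - b (i+1) ≤ 0 := by
        have := hmono (Nat.le_succ i); linarith
      nlinarith [hre_le (i+1)]
    have e2 : ∑ i ∈ Finset.range K, (b i - b (i+1)) = b 0 - b K := by
      have := Finset.sum_range_sub b K
      have e3 : ∑ i ∈ Finset.range K, (b i - b (i+1))
          = -∑ i ∈ Finset.range K, (b (i+1) - b i) := by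
        rw [← Finset.sum_neg_distrib]
        apply Finset.sum_congr rfl
        intro i _; ring
      rw [e3, this]; ring
    linarith [e2 ▸ this]
  have hre2 : 1 ≤ (z ^ (K+1)).re := by
    have h9 := congrArg Complex.re hmain
    rw [hw1] at h9
    have e : ((1 - (b K : ℂ)) * z ^ (K+1) + (b 0 : ℂ) - Sc).re
        = (1 - b K) * (z ^ (K+1)).re + b 0 - Sc.re := by
      rw [show (1 - (b K : ℂ)) = ((1 - b K : ℝ) : ℂ) by push_cast; ring]
      simp [Complex.add_re, Complex.sub_re, Complex.re_ofReal_mul]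
    rw [e] at h9
    simp only [Complex.one_re] at h9
    nlinarith
  have hz1 : z ^ (K+1) = 1 := hunit _ hre2
  have hzone : z = 1 := by
    have e : z * z ^ (K+1) = z ^ (K+2) := by ring
    rw [hz1, hw1] at e
    simpa using e
  rw [hzone] at hz
  simp only [one_pow, mul_one] at hz
  have hz' : ((1 + ∑ j ∈ Finset.range (K+1), b j : ℝ) : ℂ) = 0 := by
    push_cast
    linear_combination hz
  have hz'' : (1 + ∑ j ∈ Finset.range (K+1), b j : ℝ) = 0 := by
    exact_mod_cast hz'
  have hsum_pos : (0:ℝ) ≤ ∑ j ∈ Finset.range (K+1), b j := by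
    apply Finset.sum_nonneg
    intro j _
    have := hmono (Nat.zero_le j)
    linarith
  linarith

theorem stmt12 (K : ℕ) (a : Fin (K + 1) → ℝ)
    (hpos : 0 < a 0) (hmono : Monotone a) (hlast : a (Fin.last K) < 1) :
    ∀ z : ℂ, (((companion a).map (algebraMap ℝ ℂ)).charpoly).IsRoot z → ‖z‖ < 1 := by
  intro z hroot
  set N := (companion a).map (algebraMap ℝ ℂ) with hN
  obtain ⟨v, hv, heig⟩ := charpoly_root_eigen _ N z hroot
  have hNentry : ∀ i j : Fin (K+1), N i j =
      if (i : ℕ) + 1 = (j : ℕ) then 1 else if (i : ℕ) = K then -(a j : ℂ) else 0 := by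
    intro i j
    simp only [hN, companion, Matrix.map_apply, Nat.add_sub_cancel]
    split_ifs <;> simp
  have hrow : ∀ i : Fin (K+1), ∑ j, N i j * v j = z * v i := by
    intro i
    have := congrFun heig i
    simpa [Matrix.mulVec, dotProduct, Pi.smul_apply, smul_eq_mul] using this
  have hstep : ∀ (i : ℕ) (h : i < K), v ⟨i+1, by omega⟩ = z * v ⟨i, by omega⟩ := by
    intro i h
    have hm := hrow ⟨i, by omega⟩
    rw [Finset.sum_eq_single (⟨i+1, by omega⟩ : Fin (K+1))] at hm
    · rw [hNentry] at hm
      simp at hm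
      rw [← hm]
    · intro j _ hj
      rw [hNentry]
      have h1 : ¬ ((i : ℕ) + 1 = (j : ℕ)) := by
        intro hc
        apply hj
        apply Fin.ext
        simp [← hc]
      have h2 : ¬ ((i : ℕ) = K) := by omega
      simp [h1, h2]
    · intro hc
      exact absurd (Finset.mem_univ _) hc
  have hpow : ∀ (i : ℕ) (h : i < K+1), v ⟨i, h⟩ = z ^ i * v 0 := by
    intro i
    induction i with
    | zero => intro h; simp
    | succ m ih =>
      intro h
      rw [hstep m (by omega), ih (by omega)]
      ring
  have hv0 : v 0 ≠ 0 := by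
    intro h0
    apply hv
    funext j
    have := hpow j.val j.isLt
    rw [Fin.eta] at this
    rw [this, h0, mul_zero]
    rfl
  have hlastrow := hrow ⟨K, by omega⟩
  have hlastN : ∀ j : Fin (K+1), N ⟨K, by omega⟩ j = -(a j : ℂ) := by
    intro j
    rw [hNentry]
    have : ¬ ((K : ℕ) + 1 = (j : ℕ)) := by omega
    simp [this]
  have heq : (z ^ (K+1) + ∑ j : Fin (K+1), (a j : ℂ) * z ^ (j : ℕ)) * v 0 = 0 := by
    have e1 : ∑ j, N ⟨K, by omega⟩ j * v j
        = -∑ j : Fin (K+1), (a j : ℂ) * z ^ (j : ℕ) * v 0 := by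
      rw [← Finset.sum_neg_distrib]
      apply Finset.sum_congr rfl
      intro j _
      rw [hlastN j]
      have := hpow j.val j.isLt
      rw [Fin.eta] at this
      rw [this]
      ring
    have e2 : v ⟨K, by omega⟩ = z ^ K * v 0 := hpow K (by omega)
    rw [e1, e2] at hlastrow
    rw [add_mul, Finset.sum_mul]
    linear_combination -hlastrow
  have heq2 : z ^ (K+1) + ∑ j : Fin (K+1), (a j : ℂ) * z ^ (j : ℕ) = 0 := by
    rcases mul_eq_zero.mp heq with h | h
    · exact h
    · exact absurd h hv0
  set b : ℕ → ℝ := fun n => a ⟨min n K, by omega⟩ with hb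
  have hb0 : b 0 = a 0 := by simp [hb]
  have hbK : b K = a (Fin.last K) := by simp [hb, Fin.last]
  have hbmono : Monotone b := by
    intro n m hnm
    apply hmono
    simp only [Fin.mk_le_mk]
    omega
  have hsum : ∑ j : Fin (K+1), (a j : ℂ) * z ^ (j : ℕ)
      = ∑ j ∈ Finset.range (K+1), (b j : ℂ) * z ^ j := by
    rw [← Fin.sum_univ_eq_sum_range (fun j => (b j : ℂ) * z ^ j) (K+1)]
    apply Finset.sum_congr rfl
    intro j _
    have : b (j : ℕ) = a j := by
      simp only [hb]
      congr 1
      apply Fin.ext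
      simp
      omega
    rw [this]
  rw [hsum] at heq2
  exact EK K b (hb0 ▸ hpos) hbmono (hbK ▸ hlast) z heq2
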